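/- Suppose competitors' highest bid Z ~ Lognormal(μ, σ) and the advertiser's value V ~ Lognormal(μ', σ') are independent, σ, σ' > 0. In a second price auction where the advertiser bids V/λ (λ > 0), the expected spend per opportunity is S(λ) = E[Z·1{Z ≤ V/λ}] = e^{μ + σ²/2}·Φ((μ' − μ − ln λ − σ²)/√((σ')² + σ²)), where Φ is the standard normal CDF. -/

import Mathlib

open ProbabilityTheory MeasureTheory Real

/-- The standard normal cumulative distribution function. -/
noncomputable def stdNormCDF (x : ℝ) : ℝ :=
  (gaussianReal 0 1 (Set.Iic x)).toReal

lemma cdf_eq (t : ℝ) : stdNormCDF t = ∫ x in Set.Iic t, gaussianPDFReal 0 1 x := by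
  rw [stdNormCDF, gaussianReal_apply_eq_integral 0 one_ne_zero,
    ENNReal.toReal_ofReal (setIntegral_nonneg measurableSet_Iic
      (fun x _ => gaussianPDFReal_nonneg 0 1 x))]

lemma cdf_nonneg (t : ℝ) : 0 ≤ stdNormCDF t := ENNReal.toReal_nonneg

lemma cdf_mono : Monotone stdNormCDF := fun x y h =>
  ENNReal.toReal_mono (measure_ne_top _ _) (measure_mono (Set.Iic_subset_Iic.2 h))

lemma trans_int (g : ℝ → ℝ) (t c : ℝ) :
    ∫ x in Set.Iic t, g (x - c) = ∫ x in Set.Iic (t - c), g x := by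
  rw [← integral_indicator measurableSet_Iic, ← integral_indicator measurableSet_Iic]
  rw [← integral_sub_right_eq_self (fun x => (Set.Iic (t-c)).indicator g x) c]
  congr 1 with x
  by_cases h : x ≤ t <;> simp [Set.indicator, h, sub_le_sub_iff_right]

lemma tilt (μ σ x : ℝ) : gaussianPDFReal 0 1 x * rexp (μ + σ * x)
    = rexp (μ + σ^2/2) * gaussianPDFReal 0 1 (x - σ) := by
  simp only [gaussianPDFReal, NNReal.coe_one, mul_one, sub_zero]
  rw [mul_assoc, ← exp_add, mul_comm (rexp _), mul_assoc, ← exp_add]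
  ring_nf

lemma pdf_int {c : ℝ} (hc : 0 < c) (b : ℝ) :
    ∫ u in Set.Iic b, gaussianPDFReal 0 ⟨c^2, sq_nonneg c⟩ u = stdNormCDF (b / c) := by
  have hv : (⟨c^2, sq_nonneg c⟩ : NNReal) ≠ 0 := by
    simp [← NNReal.coe_inj, hc.ne']
  have h := gaussianReal_apply_eq_integral 0 hv (Set.Iic b)
  have h2 := gaussianReal_map_const_mul (μ := 0) (v := 1) c
  rw [mul_zero, mul_one] at h2
  rw [(show gaussianReal 0 ⟨c^2, sq_nonneg c⟩ = _ from h2.symm), Measure.map_apply (measurable_const_mul c) measurableSet_Iic] at h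
  have hpre : (c * ·) ⁻¹' Set.Iic b = Set.Iic (b / c) := by
    ext x; simp [le_div_iff₀' hc]
  rw [hpre] at h
  rw [stdNormCDF, h]
  exact (ENNReal.toReal_ofReal (setIntegral_nonneg measurableSet_Iic
      (fun x _ => gaussianPDFReal_nonneg _ _ x))).symm

lemma conv (a u : ℝ) :
    ∫ y, gaussianPDFReal 0 1 (u + a * y) * gaussianPDFReal 0 1 y
      = gaussianPDFReal 0 ⟨1 + a^2, by positivity⟩ u := by
  have hs : (0:ℝ) < 1 + a^2 := by positivity
  set s : ℝ := 1 + a^2 with hs_def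
  have h2π : (0:ℝ) < 2 * π := by positivity
  have hsπ : (0:ℝ) < Real.sqrt (2*π) := Real.sqrt_pos.2 h2π
  have hss : (0:ℝ) < Real.sqrt s := Real.sqrt_pos.2 hs
  have hinv : ((Real.sqrt (2*π))⁻¹) * ((Real.sqrt (2*π))⁻¹) = (2*π)⁻¹ := by
    rw [← mul_inv, Real.mul_self_sqrt h2π.le]
  have h1 : ∀ y, gaussianPDFReal 0 1 (u + a * y) * gaussianPDFReal 0 1 y
      = ((2*π)⁻¹ * rexp (-u^2 / (2*s))) * rexp (-(s/2) * (y + a*u/s)^2) := by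
    intro y
    have e : -(u + a*y)^2/2 + -y^2/2 = (-u^2/(2*s)) + (-(s/2) * (y + a*u/s)^2) := by
      field_simp
      ring
    simp only [gaussianPDFReal, NNReal.coe_one, mul_one, sub_zero]
    calc (Real.sqrt (2*π))⁻¹ * rexp (-(u + a*y)^2/2)
          * ((Real.sqrt (2*π))⁻¹ * rexp (-y^2/2))
        = ((Real.sqrt (2*π))⁻¹ * (Real.sqrt (2*π))⁻¹)
          * rexp (-(u + a*y)^2/2 + -y^2/2) := by rw [exp_add]; ring
      _ = (2*π)⁻¹ * rexp ((-u^2/(2*s)) + (-(s/2) * (y + a*u/s)^2)) := by rw [hinv, e]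
      _ = _ := by rw [exp_add, mul_assoc]
  rw [funext h1, integral_const_mul]
  have h2 : ∫ y, rexp (-(s/2) * (y + a*u/s)^2) = Real.sqrt (π / (s/2)) := by
    rw [← integral_gaussian (s/2)]
    exact integral_add_right_eq_self (fun y => rexp (-(s/2) * y^2)) (a*u/s)
  rw [h2]
  simp only [gaussianPDFReal, NNReal.coe_mk, sub_zero]
  rw [show π / (s/2) = 2*π/s by field_simp, Real.sqrt_div h2π.le, Real.sqrt_mul h2π.le]
  have h3 : (2*π)⁻¹ * (Real.sqrt (2*π) / Real.sqrt s) = (Real.sqrt (2*π) * Real.sqrt s)⁻¹ := by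
    rw [← hinv]
    field_simp
  rw [mul_comm ((2*π)⁻¹ * rexp (-u^2 / (2*s))), ← mul_assoc, mul_comm _ ((2*π)⁻¹), h3]
  rfl

-- real inner integral
lemma real_inner (μ σ t : ℝ) :
    ∫ x, gaussianPDFReal 0 1 x * (if x ≤ t then rexp (μ + σ*x) else 0)
      = rexp (μ + σ^2/2) * stdNormCDF (t - σ) := by
  have h1 : (fun x => gaussianPDFReal 0 1 x * (if x ≤ t then rexp (μ+σ*x) else 0))
      = Set.indicator (Set.Iic t)
          (fun x => rexp (μ+σ^2/2) * gaussianPDFReal 0 1 (x - σ)) := by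
    funext x
    by_cases h : x ≤ t <;> simp [Set.indicator, h, tilt μ σ x]
  rw [h1, integral_indicator measurableSet_Iic, integral_const_mul,
    trans_int (gaussianPDFReal 0 1) t σ, ← cdf_eq]

lemma integrable_inner (μ σ t : ℝ) :
    Integrable (fun x => gaussianPDFReal 0 1 x * (if x ≤ t then rexp (μ + σ*x) else 0)) := by
  have h1 : (fun x => gaussianPDFReal 0 1 x * (if x ≤ t then rexp (μ+σ*x) else 0))
      = Set.indicator (Set.Iic t)
          (fun x => rexp (μ+σ^2/2) * gaussianPDFReal 0 1 (x - σ)) := by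
    funext x
    by_cases h : x ≤ t <;> simp [Set.indicator, h, tilt μ σ x]
  rw [h1]
  exact (((integrable_gaussianPDFReal 0 1).comp_sub_right σ).const_mul _).indicator
    measurableSet_Iic

-- inner lintegral over gaussian
lemma inner_eval (μ σ t : ℝ) :
    ∫⁻ x, ENNReal.ofReal (if x ≤ t then rexp (μ + σ*x) else 0) ∂(gaussianReal 0 1)
      = ENNReal.ofReal (rexp (μ + σ^2/2) * stdNormCDF (t - σ)) := by
  have hg : Measurable fun x => ENNReal.ofReal (if x ≤ t then rexp (μ + σ*x) else 0) := by
    refine Measurable.ennreal_ofReal ?_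
    exact Measurable.ite measurableSet_Iic (by fun_prop) measurable_const
  rw [gaussianReal_of_var_ne_zero 0 one_ne_zero,
    lintegral_withDensity_eq_lintegral_mul _ (measurable_gaussianPDF 0 1) hg]
  have key : ∀ x, (gaussianPDF 0 1 * fun x => ENNReal.ofReal (if x ≤ t then rexp (μ+σ*x) else 0)) x
      = ENNReal.ofReal (gaussianPDFReal 0 1 x * (if x ≤ t then rexp (μ+σ*x) else 0)) := by
    intro x
    simp only [Pi.mul_apply, gaussianPDF]
    rw [← ENNReal.ofReal_mul (gaussianPDFReal_nonneg 0 1 x)]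
  rw [lintegral_congr key, ← ofReal_integral_eq_lintegral_ofReal (integrable_inner μ σ t)
    (ae_of_all _ fun x => mul_nonneg (gaussianPDFReal_nonneg 0 1 x) (by split_ifs; exacts [(exp_pos _).le, le_rfl])), real_inner]
lemma pdf_le (z : ℝ) : gaussianPDFReal 0 1 z ≤ (Real.sqrt (2*π))⁻¹ := by
  simp only [gaussianPDFReal, NNReal.coe_one, mul_one, sub_zero]
  have h : rexp (-z^2/2) ≤ 1 := by
    rw [Real.exp_le_one_iff]
    nlinarith [sq_nonneg z]
  nlinarith [Real.sqrt_nonneg (2*π), inv_nonneg.2 (Real.sqrt_nonneg (2*π)), h,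
    mul_le_of_le_one_right (inv_nonneg.2 (Real.sqrt_nonneg (2*π))) h]

lemma outer (a b : ℝ) :
    ∫⁻ y, ENNReal.ofReal (stdNormCDF (a*y+b)) ∂(gaussianReal 0 1)
      = ENNReal.ofReal (stdNormCDF (b / Real.sqrt (1+a^2))) := by
  have hpos : (0:ℝ) < 1 + a^2 := by positivity
  have hΦ : ∀ y, stdNormCDF (a*y+b) = ∫ u in Set.Iic b, gaussianPDFReal 0 1 (u + a*y) := by
    intro y
    have h := trans_int (gaussianPDFReal 0 1) b (-(a*y))
    simp only [sub_neg_eq_add] at h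
    rw [cdf_eq, add_comm (a*y) b, ← h]
  have hmΦ : Measurable fun y => ENNReal.ofReal (stdNormCDF (a*y+b)) :=
    (cdf_mono.measurable.comp (by fun_prop)).ennreal_ofReal
  rw [gaussianReal_of_var_ne_zero 0 one_ne_zero,
    lintegral_withDensity_eq_lintegral_mul _ (measurable_gaussianPDF 0 1) hmΦ]
  have key : ∀ y, (gaussianPDF 0 1 * fun y => ENNReal.ofReal (stdNormCDF (a*y+b))) y
      = ∫⁻ u in Set.Iic b,
          ENNReal.ofReal (gaussianPDFReal 0 1 (u + a*y) * gaussianPDFReal 0 1 y) := by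
    intro y
    simp only [Pi.mul_apply, gaussianPDF]
    rw [← ENNReal.ofReal_mul (gaussianPDFReal_nonneg 0 1 y), hΦ y,
      mul_comm (gaussianPDFReal 0 1 y), ← integral_mul_const,
      ofReal_integral_eq_lintegral_ofReal
        ((((integrable_gaussianPDFReal 0 1).comp_add_right (a*y)).mul_const _).restrict)
        (ae_of_all _ fun u =>
          mul_nonneg (gaussianPDFReal_nonneg 0 1 _) (gaussianPDFReal_nonneg 0 1 _))]
  rw [lintegral_congr key]
  have hum : AEMeasurable (Function.uncurry fun y u =>
      ENNReal.ofReal (gaussianPDFReal 0 1 (u + a*y) * gaussianPDFReal 0 1 y))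
      (volume.prod (volume.restrict (Set.Iic b))) := by
    refine (Measurable.ennreal_ofReal ?_).aemeasurable
    exact ((measurable_gaussianPDFReal 0 1).comp
        (measurable_snd.add (measurable_fst.const_mul a))).mul
      ((measurable_gaussianPDFReal 0 1).comp measurable_fst)
  rw [lintegral_lintegral_swap hum]
  have inner2 : ∀ u, (∫⁻ y, ENNReal.ofReal
        (gaussianPDFReal 0 1 (u + a*y) * gaussianPDFReal 0 1 y))
      = ENNReal.ofReal (gaussianPDFReal 0 ⟨1+a^2, hpos.le⟩ u) := by
    intro u
    have hint : Integrable (fun y => gaussianPDFReal 0 1 (u + a*y) * gaussianPDFReal 0 1 y) := by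
      refine (integrable_gaussianPDFReal 0 1).bdd_mul (c := (Real.sqrt (2*π))⁻¹) ?_ (ae_of_all _ fun y => ?_)
      · exact ((measurable_gaussianPDFReal 0 1).comp (by fun_prop)).aestronglyMeasurable
      · rw [Real.norm_of_nonneg (gaussianPDFReal_nonneg 0 1 _)]
        exact pdf_le _
    rw [← ofReal_integral_eq_lintegral_ofReal hint
      (ae_of_all _ fun y =>
        mul_nonneg (gaussianPDFReal_nonneg 0 1 _) (gaussianPDFReal_nonneg 0 1 _)), conv a u]
  rw [lintegral_congr inner2,
    ← ofReal_integral_eq_lintegral_ofReal ((integrable_gaussianPDFReal 0 ⟨1+a^2, hpos.le⟩).restrict)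
      (ae_of_all _ fun u => gaussianPDFReal_nonneg _ _ u)]
  congr 1
  have hc : 0 < Real.sqrt (1+a^2) := Real.sqrt_pos.2 hpos
  have hv : (⟨Real.sqrt (1+a^2)^2, sq_nonneg _⟩ : NNReal) = ⟨1+a^2, hpos.le⟩ := by
    apply Subtype.ext
    simp [Real.sq_sqrt hpos.le]
  rw [← hv]
  exact pdf_int hc b
/-- For independent `Z ~ Lognormal(μ,σ)` and `V ~ Lognormal(μ',σ')`
(realized as `Z = exp(μ + σX)`, `V = exp(μ' + σ'Y)` with `X, Y` i.i.d.
standard normal), the expected second-price spend when bidding `V/λ` is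
`E[Z·1{Z ≤ V/λ}] = e^{μ+σ²/2}·Φ((μ' − μ − ln λ − σ²)/√(σ'² + σ²))`. -/
theorem stmt11 (μ σ μ' σ' lam : ℝ) (hσ : 0 < σ) (hσ' : 0 < σ') (hlam : 0 < lam) :
    ∫ q : ℝ × ℝ,
        (if Real.exp (μ + σ * q.1) ≤ Real.exp (μ' + σ' * q.2) / lam
          then Real.exp (μ + σ * q.1) else 0)
        ∂((gaussianReal 0 1).prod (gaussianReal 0 1))
      = Real.exp (μ + σ ^ 2 / 2)
        * stdNormCDF ((μ' - μ - Real.log lam - σ ^ 2) / Real.sqrt (σ' ^ 2 + σ ^ 2)) := by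
  set t : ℝ → ℝ := fun y => (μ' - μ - Real.log lam + σ' * y) / σ with ht
  have hcond : ∀ x y : ℝ, (rexp (μ + σ * x) ≤ rexp (μ' + σ' * y) / lam) ↔ x ≤ t y := by
    intro x y
    rw [le_div_iff₀ hlam, ← Real.exp_log hlam, ← Real.exp_add, Real.exp_le_exp, ht,
      le_div_iff₀ hσ]
    constructor <;> intro h <;> nlinarith
  have hstep1 : (fun q : ℝ×ℝ => if rexp (μ + σ*q.1) ≤ rexp (μ'+σ'*q.2)/lam
        then rexp (μ+σ*q.1) else 0)
      = fun q : ℝ×ℝ => if q.1 ≤ t q.2 then rexp (μ+σ*q.1) else 0 :=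
    funext fun q => if_congr (hcond q.1 q.2) rfl rfl
  rw [hstep1]
  have hfm : Measurable fun q : ℝ×ℝ => if q.1 ≤ t q.2 then rexp (μ+σ*q.1) else 0 := by
    refine Measurable.ite ?_ (by fun_prop) measurable_const
    exact measurableSet_le measurable_fst (by fun_prop)
  have hnn : 0 ≤ᵐ[(gaussianReal 0 1).prod (gaussianReal 0 1)]
      fun q : ℝ×ℝ => if q.1 ≤ t q.2 then rexp (μ+σ*q.1) else 0 :=
    ae_of_all _ fun q => by simp only [Pi.zero_apply]; split_ifs; exacts [(exp_pos _).le, le_rfl]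
  rw [integral_eq_lintegral_of_nonneg_ae hnn hfm.aestronglyMeasurable,
    lintegral_prod_symm _ hfm.ennreal_ofReal.aemeasurable]
  have h2 : ∀ y, (∫⁻ x, ENNReal.ofReal (if x ≤ t y then rexp (μ+σ*x) else 0)
        ∂(gaussianReal 0 1))
      = ENNReal.ofReal (rexp (μ + σ^2/2))
        * ENNReal.ofReal (stdNormCDF ((σ'/σ) * y + ((μ'-μ-Real.log lam)/σ - σ))) := by
    intro y
    rw [inner_eval μ σ (t y), ENNReal.ofReal_mul (exp_pos _).le]
    have harg : t y - σ = (σ'/σ) * y + ((μ'-μ-Real.log lam)/σ - σ) := by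
      rw [ht]
      field_simp
      ring
    rw [harg]
  have hmΦ : Measurable fun y =>
      ENNReal.ofReal (stdNormCDF ((σ'/σ) * y + ((μ'-μ-Real.log lam)/σ - σ))) :=
    (cdf_mono.measurable.comp (by fun_prop)).ennreal_ofReal
  rw [lintegral_congr h2, lintegral_const_mul _ hmΦ, outer (σ'/σ) _]
  have harg2 : ((μ'-μ-Real.log lam)/σ - σ) / Real.sqrt (1+(σ'/σ)^2)
      = (μ' - μ - Real.log lam - σ^2) / Real.sqrt (σ'^2+σ^2) := by
    have h1 : 1 + (σ'/σ)^2 = (σ'^2+σ^2)/σ^2 := by field_simp; ring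
    have hs : (0:ℝ) < Real.sqrt (σ'^2+σ^2) := Real.sqrt_pos.2 (by positivity)
    rw [h1, Real.sqrt_div (by positivity) _, Real.sqrt_sq hσ.le]
    field_simp
  rw [harg2, ← ENNReal.ofReal_mul (exp_pos _).le,
    ENNReal.toReal_ofReal (mul_nonneg (exp_pos _).le (cdf_nonneg _))]
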